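/- For every natural number n, the integral over the real line of q·ψ_{2n+1}(q), where ψ_{2n+1}(q) = (2^{2n+1}(2n+1)!√π)^{-1/2} H_{2n+1}(q) e^{-q²/2}, equals 2 · π^{1/4} · √((2n+1)!) / (2^n n!). -/

import Mathlib

open MeasureTheory Real

/-- Physicists' Hermite polynomials. -/
noncomputable def H : ℕ → ℝ → ℝ
  | 0 => fun _ => 1
  | 1 => fun q => 2 * q
  | (n + 2) => fun q => 2 * q * H (n + 1) q - 2 * (n + 1) * H n q

lemma H_rec (n : ℕ) (q : ℝ) :
    H (n + 2) q = 2 * q * H (n + 1) q - 2 * ((n : ℝ) + 1) * H n q := by rw [H]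

lemma H_poly : ∀ n : ℕ, ∃ p : Polynomial ℝ, ∀ q, H n q = p.eval q
  | 0 => ⟨1, fun q => by simp [H]⟩
  | 1 => ⟨Polynomial.C 2 * Polynomial.X, fun q => by simp [H]⟩
  | (n + 2) => by
      obtain ⟨p1, hp1⟩ := H_poly (n + 1)
      obtain ⟨p0, hp0⟩ := H_poly n
      exact ⟨Polynomial.C 2 * Polynomial.X * p1 - Polynomial.C (2 * ((n : ℝ) + 1)) * p0,
        fun q => by simp [H_rec, hp1, hp0]⟩

lemma hasDerivAt_H : ∀ (n : ℕ) (q : ℝ), HasDerivAt (H (n + 1)) (2 * ((n : ℝ) + 1) * H n q) q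
  | 0, q => by
      have h : H 1 = fun x : ℝ => 2 * x := rfl
      rw [h]
      have := (hasDerivAt_id q).const_mul (2 : ℝ)
      refine this.congr_deriv ?_
      simp [H]
  | 1, q => by
      have h : H 2 = fun x : ℝ => 4 * x ^ 2 - 2 := by
        funext x
        have := H_rec 0 x
        norm_num at this
        rw [this]; simp [H]; ring
      rw [h]
      have hd : HasDerivAt (fun x : ℝ => 4 * x ^ 2 - 2) (8 * q) q := by
        have := ((hasDerivAt_pow 2 q).const_mul (4 : ℝ)).sub_const 2
        refine this.congr_deriv ?_
        push_cast; ring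
      convert hd using 1
      have : H 1 q = 2 * q := rfl
      rw [this]; push_cast; ring
  | (n + 2), q => by
      have h1 := hasDerivAt_H (n + 1) q
      have h0 := hasDerivAt_H n q
      have key : HasDerivAt (fun x : ℝ => 2 * x * H (n + 2) x - 2 * ((n : ℝ) + 1 + 1) * H (n + 1) x)
          ((2 * 1) * H (n + 2) q + 2 * q * (2 * ((n : ℝ) + 1 + 1) * H (n + 1) q)
            - 2 * ((n : ℝ) + 1 + 1) * (2 * ((n : ℝ) + 1) * H n q)) q := by
        have ha : HasDerivAt (fun x : ℝ => 2 * x) (2 * 1) q := (hasDerivAt_id q).const_mul 2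
        have hb : HasDerivAt (fun x : ℝ => 2 * x * H (n + 2) x)
            ((2 * 1) * H (n + 2) q + 2 * q * (2 * ((n : ℝ) + 1 + 1) * H (n + 1) q)) q := by
          have := ha.mul (by exact_mod_cast h1)
          refine HasDerivAt.congr_deriv this ?_; push_cast; ring
        have hc : HasDerivAt (fun x : ℝ => 2 * ((n : ℝ) + 1 + 1) * H (n + 1) x)
            (2 * ((n : ℝ) + 1 + 1) * (2 * ((n : ℝ) + 1) * H n q)) q := h0.const_mul _
        exact hb.sub hc
      have heq : H (n + 2 + 1) = fun x : ℝ =>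
          2 * x * H (n + 2) x - 2 * ((n : ℝ) + 1 + 1) * H (n + 1) x := by
        funext x
        have := H_rec (n + 1) x
        push_cast at this ⊢
        convert this using 2 <;> norm_num
      rw [heq]
      convert key using 1
      rw [H_rec n q]
      push_cast
      ring
open MeasureTheory Real

lemma integrable_pow_gauss (i : ℕ) :
    Integrable fun x : ℝ => x ^ i * Real.exp (-x ^ 2 / 2) := by
  have h := integrable_rpow_mul_exp_neg_mul_sq (b := 1/2) (by norm_num)
    (s := (i : ℝ)) ((by norm_num : (-1:ℝ) < 0).trans_le (Nat.cast_nonneg i))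
  have heq : (fun x : ℝ => x ^ ((i : ℝ)) * Real.exp (-(1/2) * x ^ 2))
      = fun x : ℝ => x ^ i * Real.exp (-x ^ 2 / 2) := by
    funext x
    rw [Real.rpow_natCast]
    congr 1
    ring
  rw [← heq]
  exact h

lemma integrable_poly_gauss (p : Polynomial ℝ) :
    Integrable fun x : ℝ => p.eval x * Real.exp (-x ^ 2 / 2) := by
  have hfun : (fun x : ℝ => p.eval x * Real.exp (-x ^ 2 / 2))
      = fun x : ℝ => ∑ i ∈ Finset.range (p.natDegree + 1),
          p.coeff i * (x ^ i * Real.exp (-x ^ 2 / 2)) := by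
    funext x
    rw [Polynomial.eval_eq_sum_range, Finset.sum_mul]
    exact Finset.sum_congr rfl fun i _ => by ring
  rw [hfun]
  exact integrable_finset_sum _ fun i _ => (integrable_pow_gauss i).const_mul _

lemma integrable_pow_mul_H_gauss (a m : ℕ) :
    Integrable fun x : ℝ => x ^ a * H m x * Real.exp (-x ^ 2 / 2) := by
  obtain ⟨p, hp⟩ := H_poly m
  have := integrable_poly_gauss (Polynomial.X ^ a * p)
  simpa [hp, mul_comm, mul_assoc, mul_left_comm] using this

lemma hasDerivAt_gauss (q : ℝ) :
    HasDerivAt (fun x : ℝ => Real.exp (-x ^ 2 / 2)) (-q * Real.exp (-q ^ 2 / 2)) q := by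
  have h : HasDerivAt (fun x : ℝ => -x ^ 2 / 2) (-q) q := by
    have := ((hasDerivAt_pow 2 q).neg).div_const 2
    refine this.congr_deriv ?_
    push_cast; ring
  simpa [mul_comm] using h.exp

lemma integral_q_H_gauss (n : ℕ) :
    ∫ q : ℝ, q * H (n + 1) q * Real.exp (-q ^ 2 / 2)
      = 2 * ((n : ℝ) + 1) * ∫ q : ℝ, H n q * Real.exp (-q ^ 2 / 2) := by
  set f : ℝ → ℝ := fun q => H (n + 1) q * Real.exp (-q ^ 2 / 2) with hf_def
  set g : ℝ → ℝ := fun q => 2 * ((n : ℝ) + 1) * (H n q * Real.exp (-q ^ 2 / 2))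
      - q * H (n + 1) q * Real.exp (-q ^ 2 / 2) with hg_def
  have hderiv : ∀ q, HasDerivAt f (g q) q := by
    intro q
    have h1 := (hasDerivAt_H n q).mul (hasDerivAt_gauss q)
    refine h1.congr_deriv ?_
    simp only [hg_def]
    ring
  have hi1 : Integrable fun q : ℝ => H n q * Real.exp (-q ^ 2 / 2) := by
    simpa using integrable_pow_mul_H_gauss 0 n
  have hi2 : Integrable fun q : ℝ => q * H (n + 1) q * Real.exp (-q ^ 2 / 2) := by
    simpa [pow_one] using integrable_pow_mul_H_gauss 1 (n + 1)
  have hf : Integrable f := by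
    simpa [hf_def] using integrable_pow_mul_H_gauss 0 (n + 1)
  have hg : Integrable g := ((hi1.const_mul _).sub hi2)
  have h0 : ∫ q, g q = 0 := integral_eq_zero_of_hasDerivAt_of_integrable hderiv hg hf
  rw [hg_def] at h0
  rw [integral_sub (hi1.const_mul _) hi2, integral_const_mul] at h0
  linarith [h0]

noncomputable def J (n : ℕ) : ℝ := ∫ q : ℝ, H n q * Real.exp (-q ^ 2 / 2)

lemma J_zero : J 0 = Real.sqrt (2 * Real.pi) := by
  have : J 0 = ∫ q : ℝ, Real.exp (-(1/2) * q ^ 2) := by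
    unfold J
    congr 1
    funext q
    have : H 0 q = 1 := rfl
    rw [this]
    rw [one_mul]
    congr 1
    ring
  rw [this, integral_gaussian]
  congr 1
  rw [div_div_eq_mul_div]
  norm_num [mul_comm]

lemma J_rec (n : ℕ) : J (n + 2) = 2 * ((n : ℝ) + 1) * J n := by
  have hi1 : Integrable fun q : ℝ => q * H (n + 1) q * Real.exp (-q ^ 2 / 2) := by
    simpa [pow_one] using integrable_pow_mul_H_gauss 1 (n + 1)
  have hi0 : Integrable fun q : ℝ => H n q * Real.exp (-q ^ 2 / 2) := by
    simpa using integrable_pow_mul_H_gauss 0 n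
  have : J (n + 2) = ∫ q : ℝ, (2 * (q * H (n + 1) q * Real.exp (-q ^ 2 / 2))
      - 2 * ((n : ℝ) + 1) * (H n q * Real.exp (-q ^ 2 / 2))) := by
    unfold J
    congr 1
    funext q
    rw [H_rec]
    ring
  rw [this, integral_sub (hi1.const_mul _) (hi0.const_mul _), integral_const_mul,
    integral_const_mul, integral_q_H_gauss]
  show 2 * (2 * ((n : ℝ) + 1) * J n) - 2 * ((n : ℝ) + 1) * J n = _
  ring

lemma J_even (n : ℕ) : J (2 * n) = Real.sqrt (2 * Real.pi) * (2 * n).factorial / n.factorial := by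
  induction n with
  | zero => simpa using J_zero
  | succ k ih =>
      have h2 : 2 * (k + 1) = 2 * k + 2 := by ring
      rw [h2, J_rec, ih]
      have hk : (k.factorial : ℝ) ≠ 0 := Nat.cast_ne_zero.mpr k.factorial_ne_zero
      have hk1 : ((k + 1).factorial : ℝ) ≠ 0 := Nat.cast_ne_zero.mpr (k + 1).factorial_ne_zero
      have e1 : ((2 * k + 2).factorial : ℝ)
          = (2 * (k : ℝ) + 2) * ((2 * (k : ℝ) + 1) * (2 * k).factorial) := by
        have h3 : 2 * k + 2 = (2 * k + 1) + 1 := by ring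
        rw [h3, Nat.factorial_succ, Nat.factorial_succ]
        push_cast; ring
      have e2 : (((k : ℕ) + 1).factorial : ℝ) = ((k : ℝ) + 1) * k.factorial := by
        rw [Nat.factorial_succ]; push_cast; ring
      rw [e1, e2]
      field_simp
      push_cast
      ring

/-- Normalized Hermite functions. -/
noncomputable def ψ (n : ℕ) (q : ℝ) : ℝ :=
  (Real.sqrt (2 ^ n * n.factorial * Real.sqrt Real.pi))⁻¹ * H n q * Real.exp (-q ^ 2 / 2)

theorem integral_q_psi_odd (n : ℕ) :
    ∫ q : ℝ, q * ψ (2 * n + 1) q =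
      2 * Real.pi ^ ((1 : ℝ) / 4) * Real.sqrt ((2 * n + 1).factorial) /
        (2 ^ n * n.factorial) := by
  set c : ℝ := (Real.sqrt (2 ^ (2 * n + 1) * (2 * n + 1).factorial * Real.sqrt Real.pi))⁻¹
    with hc
  have h1 : ∀ q : ℝ, q * ψ (2 * n + 1) q
      = c * (q * H (2 * n + 1) q * Real.exp (-q ^ 2 / 2)) := by
    intro q
    rw [ψ, hc]
    ring
  simp only [h1]
  rw [integral_const_mul, integral_q_H_gauss (2 * n),
    show (∫ q : ℝ, H (2 * n) q * Real.exp (-q ^ 2 / 2)) = J (2 * n) from rfl, J_even]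
  -- now pure algebra
  set a : ℝ := ((2 * n + 1).factorial : ℝ) with ha
  set c2 : ℝ := ((2 * n).factorial : ℝ) with hc2
  set b : ℝ := (n.factorial : ℝ) with hb
  have hapos : 0 < a := by
    rw [ha]; exact_mod_cast Nat.factorial_pos _
  have hbpos : 0 < b := by
    rw [hb]; exact_mod_cast Nat.factorial_pos _
  have hfact : (2 * (n : ℝ) + 1) * c2 = a := by
    rw [ha, hc2, Nat.factorial_succ]
    push_cast
    ring
  have hsa : Real.sqrt a * Real.sqrt a = a := Real.mul_self_sqrt hapos.le
  set P : ℝ := Real.pi ^ ((1 : ℝ) / 4) with hP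
  have hpi : P * P = Real.sqrt Real.pi := by
    rw [hP, ← Real.rpow_add Real.pi_pos, Real.sqrt_eq_rpow]
    norm_num
  have hs2 : Real.sqrt 2 * Real.sqrt 2 = 2 := Real.mul_self_sqrt (by norm_num)
  have hsqrt2pi : Real.sqrt (2 * Real.pi) = Real.sqrt 2 * Real.sqrt Real.pi :=
    Real.sqrt_mul (by norm_num) _
  have hX : Real.sqrt (2 ^ (2 * n + 1) * a * Real.sqrt Real.pi)
      = 2 ^ n * Real.sqrt 2 * Real.sqrt a * P := by
    rw [Real.sqrt_mul (by positivity), Real.sqrt_mul (by positivity)]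
    have h2pow : Real.sqrt (2 ^ (2 * n + 1)) = 2 ^ n * Real.sqrt 2 := by
      have : (2 : ℝ) ^ (2 * n + 1) = ((2 : ℝ) ^ n) ^ 2 * 2 := by
        rw [← pow_mul]; ring
      rw [this, Real.sqrt_mul (sq_nonneg _), Real.sqrt_sq (by positivity)]
    have hpp : Real.sqrt (Real.sqrt Real.pi) = P := by
      rw [hP, Real.sqrt_eq_rpow, Real.sqrt_eq_rpow, ← Real.rpow_mul Real.pi_pos.le]
      norm_num
    rw [h2pow, hpp]
  rw [hc, hX, hsqrt2pi]
  have hne : (2:ℝ) ^ n * Real.sqrt 2 * Real.sqrt a * P ≠ 0 := by positivity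
  field_simp
  have hP0 : P ≠ 0 := by rw [hP]; positivity
  rw [← hpi, sq, hsa, ← hfact, div_eq_iff hP0]
  push_cast
  ring
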